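/- Let p be a prime and G a finite p-group whose commutator subgroup G' is not contained in the center Z(G). If H is an abelian subgroup of G of index p, then H = C_G(G'). In particular, G has at most one abelian subgroup of index p. -/

import Mathlib

theorem stmt_2 {p : ℕ} (hp : p.Prime)
    {G : Type} [Group G] [Fintype G] (hpG : IsPGroup p G)
    (hnc : ¬ commutator G ≤ Subgroup.center G)
    (H : Subgroup G) (hab : ∀ a ∈ H, ∀ b ∈ H, a * b = b * a)
    (hidx : H.index = p) :
    H = Subgroup.centralizer (commutator G : Set G) := by
  have hpfact : Fact p.Prime := ⟨hp⟩
  have hne : H ≠ ⊤ := by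
    intro h
    rw [h, Subgroup.index_top] at hidx
    exact hp.ne_one hidx.symm
  -- H is normal: normalizer condition in nilpotent (p-)groups
  have hnorm : H.Normal := by
    have nc := normalizerCondition_of_isNilpotent (G := G) (h := hpG.isNilpotent)
    have hlt : H < (Subgroup.normalizer (H : Set G)) := nc H (lt_top_iff_ne_top.mpr hne)
    have h1 : H.relIndex (Subgroup.normalizer (H : Set G)) * (Subgroup.normalizer (H : Set G)).index = H.index :=
      Subgroup.relIndex_mul_index Subgroup.le_normalizer
    have hrel1 : H.relIndex (Subgroup.normalizer (H : Set G)) ≠ 1 := by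
      intro h
      exact hlt.ne (le_antisymm hlt.le (Subgroup.relIndex_eq_one.mp h))
    have hdvd : H.relIndex (Subgroup.normalizer (H : Set G)) ∣ p := ⟨_, (hidx ▸ h1).symm⟩
    have : H.relIndex (Subgroup.normalizer (H : Set G)) = p := (hp.eq_one_or_self_of_dvd _ hdvd).resolve_left hrel1
    rw [this, hidx] at h1
    have hn1 : (Subgroup.normalizer (H : Set G)).index = 1 := (Nat.mul_eq_left hp.ne_zero).mp h1
    exact Subgroup.normalizer_eq_top_iff.mp (Subgroup.index_eq_one.mp hn1)
  -- commutator G ≤ H since G/H has prime order, hence is cyclic and commutative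
  have hcomm : commutator G ≤ H := by
    have hcard : Nat.card (G ⧸ H) = p := hidx
    have : IsCyclic (G ⧸ H) := isCyclic_of_prime_card hcard
    letI : CommGroup (G ⧸ H) := IsCyclic.commGroup
    have := Abelianization.commutator_subset_ker (QuotientGroup.mk' H)
    rwa [QuotientGroup.ker_mk'] at this
  -- H ≤ centralizer
  have hle : H ≤ Subgroup.centralizer (commutator G : Set G) := by
    intro h hh
    rw [Subgroup.mem_centralizer_iff]
    intro g hg
    exact hab g (hcomm hg) h hh
  -- centralizer ≠ ⊤
  have hcne : Subgroup.centralizer (commutator G : Set G) ≠ ⊤ := by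
    intro h
    exact hnc (Subgroup.centralizer_eq_top_iff_subset.mp h)
  -- conclude
  have h1 : H.relIndex (Subgroup.centralizer (commutator G : Set G)) *
      (Subgroup.centralizer (commutator G : Set G)).index = H.index :=
    Subgroup.relIndex_mul_index hle
  have hdvd : (Subgroup.centralizer (commutator G : Set G)).index ∣ p :=
    ⟨_, by rw [← hidx, ← h1]; ring⟩
  have hi1 : (Subgroup.centralizer (commutator G : Set G)).index ≠ 1 := by
    intro h
    exact hcne (Subgroup.index_eq_one.mp h)
  have hip : (Subgroup.centralizer (commutator G : Set G)).index = p :=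
    (hp.eq_one_or_self_of_dvd _ hdvd).resolve_left hi1
  have hrel : H.relIndex (Subgroup.centralizer (commutator G : Set G)) = 1 := by
    rw [hip, hidx] at h1
    exact (Nat.mul_eq_right hp.ne_zero).mp h1
  exact le_antisymm hle (Subgroup.relIndex_eq_one.mp hrel)
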